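/- Let μ > 0, σ > 0, α > 1, and b be real. Define the one-sided truncated normal densities p(x) = (1/(μσ√(2π))) · exp(-x²/(2μ²σ²)) / Φ(b/(μσ)) and q(x) = (1/(μσ√(2π))) · exp(-(x-μ)²/(2μ²σ²)) / Φ((b-μ)/(μσ)) for x ≤ b. Then (1/(α-1)) · ln(∫_{-∞}^b q(x)^α · p(x)^(1-α) dx) ≤ α/(2σ²). -/

import Mathlib

open MeasureTheory Real Filter

/-- The standard normal cumulative distribution function
`Φ(x) = (√(2π))⁻¹ ∫_{-∞}^x exp(-t²/2) dt`. -/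
noncomputable def stdNormalCDF (x : ℝ) : ℝ :=
  (Real.sqrt (2 * Real.pi))⁻¹ * ∫ t in Set.Iic x, Real.exp (-t ^ 2 / 2)

/-- The standard normal density `φ(x) = (√(2π))⁻¹ exp(-x²/2)`. -/
noncomputable def stdNormalPDF (x : ℝ) : ℝ :=
  (Real.sqrt (2 * Real.pi))⁻¹ * Real.exp (-x ^ 2 / 2)

open Set Topology

lemma gauss_eq : (fun t : ℝ => Real.exp (-t ^ 2 / 2)) = fun t : ℝ => Real.exp (-(1/2) * t ^ 2) := by
  funext t; ring_nf

lemma gauss_integrable : Integrable (fun t : ℝ => Real.exp (-t ^ 2 / 2)) := by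
  rw [gauss_eq]; exact integrable_exp_neg_mul_sq (by norm_num)

lemma gauss_mul_integrable : Integrable (fun t : ℝ => -t * Real.exp (-t ^ 2 / 2)) := by
  have h := integrable_rpow_mul_exp_neg_mul_sq (b := 1/2) (by norm_num) (s := 1) (by norm_num)
  have h2 : Integrable (fun t : ℝ => t * Real.exp (-(1/2) * t ^ 2)) := by
    simpa [Real.rpow_one] using h
  have h3 := h2.neg
  apply h3.congr
  filter_upwards with t
  simp only [Pi.neg_apply, neg_mul]
  ring_nf

lemma stdNormalPDF_pos (x : ℝ) : 0 < stdNormalPDF x := by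
  unfold stdNormalPDF
  positivity

lemma stdNormalCDF_pos (x : ℝ) : 0 < stdNormalCDF x := by
  unfold stdNormalCDF
  apply mul_pos (by positivity)
  rw [setIntegral_pos_iff_support_of_nonneg_ae]
  · have : Function.support (fun t : ℝ => Real.exp (-t ^ 2 / 2)) = Set.univ := by
      ext t; simp [Function.mem_support, (Real.exp_pos _).ne']
    rw [this, Set.univ_inter, Real.volume_Iic]
    simp
  · filter_upwards with t using (Real.exp_pos _).le
  · exact gauss_integrable.integrableOn

lemma hasDerivAt_stdNormalCDF (x : ℝ) : HasDerivAt stdNormalCDF (stdNormalPDF x) x := by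
  have heq : stdNormalCDF = fun y =>
      (Real.sqrt (2 * Real.pi))⁻¹ * ((∫ t in Set.Iic (0:ℝ), Real.exp (-t ^ 2 / 2))
        + ∫ t in (0:ℝ)..y, Real.exp (-t ^ 2 / 2)) := by
    funext y
    unfold stdNormalCDF
    congr 1
    have := intervalIntegral.integral_Iic_sub_Iic (μ := volume)
      (f := fun t : ℝ => Real.exp (-t ^ 2 / 2)) (a := (0:ℝ)) (b := y)
      gauss_integrable.integrableOn gauss_integrable.integrableOn
    linarith [this]
  rw [heq]
  have hcont : Continuous fun t : ℝ => Real.exp (-t ^ 2 / 2) := by continuity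
  have h : HasDerivAt (fun y => ∫ t in (0:ℝ)..y, Real.exp (-t ^ 2 / 2))
      (Real.exp (-x ^ 2 / 2)) x :=
    intervalIntegral.integral_hasDerivAt_right (hcont.intervalIntegrable _ _)
      (hcont.stronglyMeasurableAtFilter _ _) hcont.continuousAt
  have := (h.const_add (∫ t in Set.Iic (0:ℝ), Real.exp (-t ^ 2 / 2))).const_mul
    (Real.sqrt (2 * Real.pi))⁻¹
  simpa [stdNormalPDF, mul_comm] using this

lemma gauss_antideriv (x : ℝ) :
    ∫ t in Set.Iic x, -t * Real.exp (-t ^ 2 / 2) = Real.exp (-x ^ 2 / 2) := by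
  have hd : ∀ t ∈ Set.Iio x, HasDerivAt (fun t : ℝ => Real.exp (-t ^ 2 / 2))
      (-t * Real.exp (-t ^ 2 / 2)) t := by
    intro t _
    have h1 : HasDerivAt (fun t : ℝ => -t ^ 2 / 2) (-t) t := by
      have := ((hasDerivAt_pow 2 t).neg).div_const 2
      simpa using this.congr_deriv (by push_cast; ring)
    simpa [mul_comm] using h1.exp
  have htend : Tendsto (fun t : ℝ => Real.exp (-t ^ 2 / 2)) atBot (𝓝 0) := by
    apply Real.tendsto_exp_atBot.comp
    have h1 : Tendsto (fun t : ℝ => t ^ 2) atBot atTop := by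
      have h2 : Tendsto (fun t : ℝ => (-t) ^ 2) atBot atTop :=
        (tendsto_pow_atTop (two_ne_zero)).comp tendsto_neg_atBot_atTop
      refine h2.congr fun t => by ring
    have h3 : Tendsto (fun t : ℝ => t ^ 2 / 2) atBot atTop := h1.atTop_div_const (by norm_num)
    have h4 := tendsto_neg_atTop_atBot.comp h3
    refine h4.congr fun t => ?_
    simp [Function.comp, neg_div]
  have := MeasureTheory.integral_Iic_of_hasDerivAt_of_tendsto
    (f := fun t : ℝ => Real.exp (-t ^ 2 / 2)) (f' := fun t => -t * Real.exp (-t ^ 2 / 2))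
    (Continuous.continuousWithinAt (by continuity)) hd
    gauss_mul_integrable.integrableOn htend
  simpa using this

lemma key_nonneg (x : ℝ) : 0 ≤ x * stdNormalCDF x + stdNormalPDF x := by
  rcases le_or_gt 0 x with hx | hx
  · have := stdNormalCDF_pos x
    have := stdNormalPDF_pos x
    nlinarith
  · -- need (-x) * stdNormalCDF x ≤ stdNormalPDF x
    have hle : (-x) * ∫ t in Set.Iic x, Real.exp (-t ^ 2 / 2)
        ≤ ∫ t in Set.Iic x, -t * Real.exp (-t ^ 2 / 2) := by
      rw [← MeasureTheory.integral_const_mul]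
      apply setIntegral_mono_on (gauss_integrable.const_mul _).integrableOn
        gauss_mul_integrable.integrableOn measurableSet_Iic
      intro t ht
      simp only [Set.mem_Iic] at ht
      have : (0:ℝ) < Real.exp (-t ^ 2 / 2) := Real.exp_pos _
      nlinarith
    rw [gauss_antideriv] at hle
    unfold stdNormalCDF stdNormalPDF
    have hs : (0:ℝ) < (Real.sqrt (2 * Real.pi))⁻¹ := by positivity
    nlinarith

lemma hasDerivAt_stdNormalPDF (x : ℝ) :
    HasDerivAt stdNormalPDF (-x * stdNormalPDF x) x := by
  have h1 : HasDerivAt (fun t : ℝ => -t ^ 2 / 2) (-x) x := by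
    have h := ((hasDerivAt_pow 2 x).neg).div_const 2
    refine h.congr_deriv ?_
    push_cast
    ring
  have h2 := (h1.exp).const_mul (Real.sqrt (2 * Real.pi))⁻¹
  have : stdNormalPDF = fun t : ℝ => (Real.sqrt (2 * Real.pi))⁻¹ * Real.exp (-t ^ 2 / 2) := rfl
  rw [this]
  refine h2.congr_deriv ?_
  symm
  show -x * ((Real.sqrt (2 * Real.pi))⁻¹ * Real.exp (-x ^ 2 / 2)) = _
  ring

lemma hasDerivAt_logCDF (x : ℝ) :
    HasDerivAt (fun y => Real.log (stdNormalCDF y)) (stdNormalPDF x / stdNormalCDF x) x :=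
  (hasDerivAt_stdNormalCDF x).log (stdNormalCDF_pos x).ne'

lemma concave_logCDF : ConcaveOn ℝ Set.univ (fun y => Real.log (stdNormalCDF y)) := by
  have hdiff : Differentiable ℝ (fun y => Real.log (stdNormalCDF y)) :=
    fun x => (hasDerivAt_logCDF x).differentiableAt
  have hderiv : deriv (fun y => Real.log (stdNormalCDF y))
      = fun x => stdNormalPDF x / stdNormalCDF x := by
    funext x; exact (hasDerivAt_logCDF x).deriv
  apply Antitone.concaveOn_univ_of_deriv hdiff
  rw [hderiv]
  have hd : ∀ x : ℝ, HasDerivAt (fun x => stdNormalPDF x / stdNormalCDF x)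
      ((-x * stdNormalPDF x * stdNormalCDF x - stdNormalPDF x * stdNormalPDF x)
        / stdNormalCDF x ^ 2) x := fun x =>
    (hasDerivAt_stdNormalPDF x).div (hasDerivAt_stdNormalCDF x) (stdNormalCDF_pos x).ne'
  apply antitone_of_deriv_nonpos (fun x => (hd x).differentiableAt)
  intro x
  rw [(hd x).deriv]
  apply div_nonpos_of_nonpos_of_nonneg _ (by positivity)
  have h := key_nonneg x
  have h2 := (stdNormalPDF_pos x).le
  nlinarith

lemma logCDF_ineq {α : ℝ} (hα : 1 < α) (t c : ℝ) :
    Real.log (stdNormalCDF (t - α * c)) + (α - 1) * Real.log (stdNormalCDF t)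
      ≤ α * Real.log (stdNormalCDF (t - c)) := by
  have hα0 : (0:ℝ) < α := by linarith
  have hcc := concave_logCDF.2 (Set.mem_univ (t - α * c)) (Set.mem_univ t)
    (by positivity : (0:ℝ) ≤ 1/α) (by rw [sub_nonneg]; rw [div_le_one hα0]; linarith : (0:ℝ) ≤ 1 - 1/α)
    (by field_simp; ring)
  have hpt : (1/α) • (t - α * c) + (1 - 1/α) • t = t - c := by
    simp only [smul_eq_mul]; field_simp; ring
  rw [hpt] at hcc
  simp only [smul_eq_mul] at hcc
  have hmul := mul_le_mul_of_nonneg_left hcc hα0.le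
  have hexp : α * (1/α * Real.log (stdNormalCDF (t - α * c))
      + (1 - 1/α) * Real.log (stdNormalCDF t))
      = Real.log (stdNormalCDF (t - α * c)) + (α - 1) * Real.log (stdNormalCDF t) := by
    field_simp
  rw [hexp] at hmul
  linarith

lemma integral_comp_mul_left_Iic (g : ℝ → ℝ) (a : ℝ) {c : ℝ} (hc : 0 < c) :
    (∫ x in Set.Iic a, g (c * x)) = c⁻¹ • ∫ x in Set.Iic (c * a), g x := by
  rw [← integral_indicator measurableSet_Iic, ← integral_indicator measurableSet_Iic,
    ← abs_of_pos (inv_pos.mpr hc), ← Measure.integral_comp_mul_left]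
  congr 1
  ext1 x
  rw [← Set.indicator_comp_right, Set.preimage_const_mul_Iic₀ _ hc,
    mul_div_cancel_left₀ _ hc.ne']
  rfl

lemma integral_comp_sub_right_Iic (g : ℝ → ℝ) (a m : ℝ) :
    (∫ x in Set.Iic a, g (x - m)) = ∫ x in Set.Iic (a - m), g x := by
  rw [← integral_indicator measurableSet_Iic, ← integral_indicator measurableSet_Iic,
    ← integral_sub_right_eq_self (Set.indicator (Set.Iic (a - m)) g) m]
  congr 1
  ext1 x
  have h := Set.indicator_comp_right (fun x : ℝ => x - m) (s := Set.Iic (a - m)) (g := g) (x := x)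
  have hpre : (fun x : ℝ => x - m) ⁻¹' Set.Iic (a - m) = Set.Iic a := by
    ext y; simp [sub_le_sub_iff_right]
  rw [hpre] at h
  simp only [Function.comp_def] at h
  exact h

lemma gauss_integral_Iic {s : ℝ} (hs : 0 < s) (m b : ℝ) :
    ∫ x in Set.Iic b, Real.exp (-(x - m) ^ 2 / (2 * s ^ 2))
      = s * Real.sqrt (2 * Real.pi) * stdNormalCDF ((b - m) / s) := by
  have hsne : s ≠ 0 := hs.ne'
  calc ∫ x in Set.Iic b, Real.exp (-(x - m) ^ 2 / (2 * s ^ 2))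
      = ∫ x in Set.Iic b, (fun y => Real.exp (-(s⁻¹ * y) ^ 2 / 2)) (x - m) := by
        congr 1
        funext x
        have harg : -(x - m) ^ 2 / (2 * s ^ 2) = -(s⁻¹ * (x - m)) ^ 2 / 2 := by
          ring
        simp only
        rw [harg]
    _ = ∫ y in Set.Iic (b - m), Real.exp (-(s⁻¹ * y) ^ 2 / 2) :=
        integral_comp_sub_right_Iic (fun y => Real.exp (-(s⁻¹ * y) ^ 2 / 2)) b m
    _ = (s⁻¹)⁻¹ • ∫ t in Set.Iic (s⁻¹ * (b - m)), Real.exp (-t ^ 2 / 2) := by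
        simpa using integral_comp_mul_left_Iic (fun t => Real.exp (-t ^ 2 / 2)) (b - m)
          (inv_pos.mpr hs)
    _ = s * Real.sqrt (2 * Real.pi) * stdNormalCDF ((b - m) / s) := by
        rw [inv_inv, smul_eq_mul]
        unfold stdNormalCDF
        rw [inv_mul_eq_div]
        have hsq : Real.sqrt (2 * Real.pi) > 0 := by positivity
        field_simp

/-- Theorem 4.1, other direction: the Rényi divergence
`D_α(f(·;μ,μσ,-∞,b) ‖ f(·;0,μσ,-∞,b))` is at most `α/(2σ²)`. -/
theorem renyi_truncated_normal_halfline_le' (μ σ α b : ℝ)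
    (hμ : 0 < μ) (hσ : 0 < σ) (hα : 1 < α) :
    (1 / (α - 1)) * Real.log (∫ x in Set.Iic b,
        ((1 / (μ * σ * Real.sqrt (2 * Real.pi))) *
            Real.exp (-(x - μ) ^ 2 / (2 * μ ^ 2 * σ ^ 2)) /
            stdNormalCDF ((b - μ) / (μ * σ))) ^ α *
        ((1 / (μ * σ * Real.sqrt (2 * Real.pi))) *
            Real.exp (-x ^ 2 / (2 * μ ^ 2 * σ ^ 2)) /
            stdNormalCDF (b / (μ * σ))) ^ (1 - α)) ≤
      α / (2 * σ ^ 2) := by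
  have hs : (0:ℝ) < μ * σ := mul_pos hμ hσ
  have hsq : (0:ℝ) < Real.sqrt (2 * Real.pi) := by positivity
  have hApos : (0:ℝ) < 1 / (μ * σ * Real.sqrt (2 * Real.pi)) := by positivity
  have hD1pos : 0 < stdNormalCDF ((b - μ) / (μ * σ)) := stdNormalCDF_pos _
  have hD2pos : 0 < stdNormalCDF (b / (μ * σ)) := stdNormalCDF_pos _
  have hD3pos : 0 < stdNormalCDF ((b - α * μ) / (μ * σ)) := stdNormalCDF_pos _
  set A := 1 / (μ * σ * Real.sqrt (2 * Real.pi)) with hAdef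
  set D₁ := stdNormalCDF ((b - μ) / (μ * σ)) with hD1def
  set D₂ := stdNormalCDF (b / (μ * σ)) with hD2def
  set D₃ := stdNormalCDF ((b - α * μ) / (μ * σ)) with hD3def
  set c₀ := α * (α - 1) * μ ^ 2 / (2 * (μ * σ) ^ 2) with hc0def
  set K := A * Real.exp c₀ * (D₁ ^ α)⁻¹ * D₂ ^ (α - 1) with hKdef
  -- pointwise identity
  have hpt : ∀ x : ℝ,
      (A * Real.exp (-(x - μ) ^ 2 / (2 * μ ^ 2 * σ ^ 2)) / D₁) ^ α *
      (A * Real.exp (-x ^ 2 / (2 * μ ^ 2 * σ ^ 2)) / D₂) ^ (1 - α)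
      = K * Real.exp (-(x - α * μ) ^ 2 / (2 * (μ * σ) ^ 2)) := by
    intro x
    rw [div_rpow (by positivity) hD1pos.le, div_rpow (by positivity) hD2pos.le,
      mul_rpow hApos.le (Real.exp_pos _).le, mul_rpow hApos.le (Real.exp_pos _).le,
      ← Real.exp_mul, ← Real.exp_mul]
    have hAa : A ^ α * A ^ (1 - α) = A := by
      rw [← Real.rpow_add hApos]
      norm_num
    have hexp : Real.exp (-(x - μ) ^ 2 / (2 * μ ^ 2 * σ ^ 2) * α) *
        Real.exp (-x ^ 2 / (2 * μ ^ 2 * σ ^ 2) * (1 - α))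
        = Real.exp c₀ * Real.exp (-(x - α * μ) ^ 2 / (2 * (μ * σ) ^ 2)) := by
      rw [← Real.exp_add, ← Real.exp_add, hc0def]
      congr 1
      field_simp
      ring
    have hD2r : (D₂ ^ (1 - α))⁻¹ = D₂ ^ (α - 1) := by
      rw [← Real.rpow_neg hD2pos.le]
      congr 1
      ring
    rw [div_eq_mul_inv (A ^ (1 - α) * Real.exp (-x ^ 2 / (2 * μ ^ 2 * σ ^ 2) * (1 - α)))
      (D₂ ^ (1 - α)), hD2r]
    calc A ^ α * Real.exp (-(x - μ) ^ 2 / (2 * μ ^ 2 * σ ^ 2) * α) / D₁ ^ α *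
        (A ^ (1 - α) * Real.exp (-x ^ 2 / (2 * μ ^ 2 * σ ^ 2) * (1 - α)) * D₂ ^ (α - 1))
        = (A ^ α * A ^ (1 - α)) * (Real.exp (-(x - μ) ^ 2 / (2 * μ ^ 2 * σ ^ 2) * α) *
            Real.exp (-x ^ 2 / (2 * μ ^ 2 * σ ^ 2) * (1 - α))) / D₁ ^ α * D₂ ^ (α - 1) := by
          ring
      _ = K * Real.exp (-(x - α * μ) ^ 2 / (2 * (μ * σ) ^ 2)) := by
          rw [hAa, hexp, hKdef]
          ring
  rw [MeasureTheory.setIntegral_congr_fun measurableSet_Iic (fun x _ => hpt x),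
    MeasureTheory.integral_const_mul, gauss_integral_Iic hs (α * μ) b]
  have hV : K * (μ * σ * Real.sqrt (2 * Real.pi) * D₃)
      = Real.exp c₀ * D₃ * D₂ ^ (α - 1) / D₁ ^ α := by
    rw [hKdef, hAdef]
    have h1 : D₁ ^ α ≠ 0 := by positivity
    field_simp
  rw [hV]
  have hlog : Real.log (Real.exp c₀ * D₃ * D₂ ^ (α - 1) / D₁ ^ α)
      = c₀ + Real.log D₃ + (α - 1) * Real.log D₂ - α * Real.log D₁ := by
    rw [Real.log_div (by positivity) (by positivity), Real.log_mul (by positivity) (by positivity),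
      Real.log_mul (Real.exp_pos _).ne' hD3pos.ne', Real.log_exp,
      Real.log_rpow hD2pos, Real.log_rpow hD1pos]
  rw [hlog]
  -- key inequality
  have hkey := logCDF_ineq hα (b / (μ * σ)) (μ / (μ * σ))
  have e1 : b / (μ * σ) - α * (μ / (μ * σ)) = (b - α * μ) / (μ * σ) := by
    field_simp
  have e2 : b / (μ * σ) - μ / (μ * σ) = (b - μ) / (μ * σ) := by
    field_simp
  rw [e1, e2, ← hD3def, ← hD2def, ← hD1def] at hkey
  have hc0' : c₀ = α * (α - 1) / (2 * σ ^ 2) := by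
    rw [hc0def]
    field_simp
  have hstep : (1 / (α - 1)) * (c₀ + Real.log D₃ + (α - 1) * Real.log D₂ - α * Real.log D₁)
      ≤ (1 / (α - 1)) * c₀ := by
    apply mul_le_mul_of_nonneg_left _ (div_nonneg (by norm_num) (by linarith))
    linarith
  refine hstep.trans ?_
  rw [hc0']
  rw [show (1 / (α - 1)) * (α * (α - 1) / (2 * σ ^ 2)) = α / (2 * σ ^ 2) * ((α - 1) / (α - 1)) by
    ring]
  rw [div_self (by linarith : α - 1 ≠ 0), mul_one]
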